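/- Uniqueness of collision decomposition: suppose words over an alphabet containing for each 4-tuple of words (a,b,c,d) a distinguished letter F(a,b,c,d), such that F(a,b,c,d) never occurs inside a, b, c or d (well-foundedness of the term structure). If t₁ · F(t₁,t₂,t₃,t₄) · t₂ = m₁ · F(m₁,m₂,m₃,m₄) · m₂, then t₁ = m₁, t₂ = m₂, t₃ = m₃ and t₄ = m₄. -/

import Mathlib

lemma mem_le_map_sum {A : Type} (size : A → ℕ) {x : A} {l : List A}
    (hx : x ∈ l) : size x ≤ (l.map size).sum :=
  List.single_le_sum (fun _ _ => Nat.zero_le _) _ (List.mem_map_of_mem (f := size) hx)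

/-- Uniqueness of collision decomposition.  Messages are words
over an alphabet `A`; `F` assigns to every 4-tuple of words a distinguished
letter.  A well-founded size function guarantees that the letter `F(a,b,c,d)`
cannot occur in the words `a,b,c,d`.  Then a word can be written in the form
`t₁ · F(t₁,t₂,t₃,t₄) · t₂` in at most one way. -/
theorem unique_collision_decomposition
    (A : Type)
    (F : List A → List A → List A → List A → A)
    (size : A → ℕ)
    (hpos : ∀ a : A, 1 ≤ size a)
    -- the size of the letter `F(a,b,c,d)` exceeds the total size of `a,b,c,d`
    (hsize : ∀ a b c d : List A,
      ((a.map size).sum + (b.map size).sum + (c.map size).sum + (d.map size).sum)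
        < size (F a b c d))
    (hinj : ∀ a b c d a' b' c' d' : List A,
      F a b c d = F a' b' c' d' → a = a' ∧ b = b' ∧ c = c' ∧ d = d')
    (t₁ t₂ t₃ t₄ m₁ m₂ m₃ m₄ : List A)
    (heq : t₁ ++ [F t₁ t₂ t₃ t₄] ++ t₂ = m₁ ++ [F m₁ m₂ m₃ m₄] ++ m₂) :
    t₁ = m₁ ∧ t₂ = m₂ ∧ t₃ = m₃ ∧ t₄ = m₄ := by
  set Ft := F t₁ t₂ t₃ t₄ with hFt
  set Fm := F m₁ m₂ m₃ m₄ with hFm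
  have key : t₁ = m₁ ∧ Ft = Fm := by
    have h : t₁ ++ ([Ft] ++ t₂) = m₁ ++ ([Fm] ++ m₂) := by
      simpa [List.append_assoc] using heq
    rcases List.append_eq_append_iff.mp h with ⟨a', ha, hb⟩ | ⟨c', hc, hd⟩
    · cases a' with
      | nil =>
        simp at ha hb
        exact ⟨ha.symm, hb.1⟩
      | cons x a'' =>
        exfalso
        have hx : x = Ft := by
          have := hb
          simp [List.cons_append] at this
          exact this.1.symm
        subst hx
        have hFt_mem : Ft ∈ m₁ := by rw [ha]; simp
        have hFm_mem : Fm ∈ t₂ := by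
          have : t₂ = a'' ++ ([Fm] ++ m₂) := by
            have := hb; simp [List.cons_append] at this; simpa using this
          rw [this]; simp
        have h1 : size Ft ≤ (m₁.map size).sum := mem_le_map_sum size hFt_mem
        have h2 : size Fm ≤ (t₂.map size).sum := mem_le_map_sum size hFm_mem
        have h3 := hsize t₁ t₂ t₃ t₄
        have h4 := hsize m₁ m₂ m₃ m₄
        simp only [hFt, hFm] at h1 h2
        omega
    · cases c' with
      | nil =>
        simp at hc hd
        exact ⟨hc, hd.1.symm⟩
      | cons x c'' =>
        exfalso
        have hx : x = Fm := by
          have := hd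
          simp [List.cons_append] at this
          exact this.1.symm
        subst hx
        have hFm_mem : Fm ∈ t₁ := by rw [hc]; simp
        have hFt_mem : Ft ∈ m₂ := by
          have : m₂ = c'' ++ ([Ft] ++ t₂) := by
            have := hd; simp [List.cons_append] at this; simpa using this
          rw [this]; simp
        have h1 : size Fm ≤ (t₁.map size).sum := mem_le_map_sum size hFm_mem
        have h2 : size Ft ≤ (m₂.map size).sum := mem_le_map_sum size hFt_mem
        have h3 := hsize t₁ t₂ t₃ t₄
        have h4 := hsize m₁ m₂ m₃ m₄
        simp only [hFt, hFm] at h1 h2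
        omega
  obtain ⟨h1, hF⟩ := key
  obtain ⟨_, h2, h3, h4⟩ := hinj _ _ _ _ _ _ _ _ hF
  exact ⟨h1, h2, h3, h4⟩
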